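/- Let R be a G-graded ring. If the intersection graph Gr_G(R) of graded left ideals is connected, then its diameter is at most 2. -/

import Mathlib

variable {G R : Type*} [AddGroup G] [DecidableEq G] [Ring R]

/-- The set of proper nontrivial `G`-graded left ideals of `R`. -/
def hV (𝒜 : G → AddSubgroup R) [GradedRing 𝒜] : Set (Ideal R) :=
  {I | I ≠ ⊥ ∧ I ≠ ⊤ ∧ Ideal.IsHomogeneous 𝒜 I}

/-- The intersection graph on a set of (left) ideals: two distinct ideals are
adjacent iff their intersection is nonzero. -/
def interGraph (V : Set (Ideal R)) : SimpleGraph V where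
  Adj I J := I ≠ J ∧ (I : Ideal R) ⊓ (J : Ideal R) ≠ ⊥
  symm := ⟨fun I J ⟨h1, h2⟩ => ⟨h1.symm, by rwa [inf_comm] at h2⟩⟩
  loopless := ⟨fun I ⟨h1, _⟩ => h1 rfl⟩
/-- If the intersection graph of graded left ideals is connected,
then its diameter is at most 2 (every pair of vertices is at distance ≤ 2). -/
theorem stmt3 (𝒜 : G → AddSubgroup R) [GradedRing 𝒜]
    (h : (interGraph (hV 𝒜)).Connected) :
    ∀ I J : hV 𝒜, (interGraph (hV 𝒜)).edist I J ≤ 2 := by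
  intro I J
  have hr : (interGraph (hV 𝒜)).Reachable I J := h I J
  have hne : (interGraph (hV 𝒜)).edist I J ≠ ⊤ :=
    (SimpleGraph.edist_ne_top_iff_reachable).mpr hr
  have hed : ((((interGraph (hV 𝒜)).dist I J : ℕ)) : ℕ∞) = (interGraph (hV 𝒜)).edist I J :=
    ENat.coe_toNat hne
  by_contra hc
  have h3 : 3 ≤ (interGraph (hV 𝒜)).dist I J := by
    by_contra h'
    push_neg at h'
    apply hc
    rw [← hed]
    exact_mod_cast Nat.lt_succ_iff.mp h'
  obtain ⟨p, hlen⟩ := hr.exists_walk_length_eq_dist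
  cases p with
  | nil => simp at h3
  | cons h₁ p₁ =>
    rename_i K₁
    cases p₁ with
    | nil => simp at hlen; omega
    | cons h₂ q =>
      rename_i K₂
      simp only [SimpleGraph.Walk.length_cons] at hlen
      -- dist from I to J equals q.length + 2
      have hIneJ : I ≠ J := by
        rintro rfl
        simp [SimpleGraph.dist_self] at h3
      have hIJ0 : (I : Ideal R) ⊓ (J : Ideal R) = ⊥ := by
        by_contra hne'
        have hadj : (interGraph (hV 𝒜)).Adj I J := ⟨hIneJ, hne'⟩
        have := SimpleGraph.dist_le (SimpleGraph.Walk.cons hadj SimpleGraph.Walk.nil)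
        simp at this; omega
      have hK₁J : (K₁ : Ideal R) ⊓ (J : Ideal R) = ⊥ := by
        by_contra hne'
        have hKJ : K₁ ≠ J := by
          rintro rfl
          have := SimpleGraph.dist_le (SimpleGraph.Walk.cons h₁ SimpleGraph.Walk.nil)
          simp at this; omega
        have hadj : (interGraph (hV 𝒜)).Adj K₁ J := ⟨hKJ, hne'⟩
        have := SimpleGraph.dist_le
          (SimpleGraph.Walk.cons h₁ (SimpleGraph.Walk.cons hadj SimpleGraph.Walk.nil))
        simp at this; omega
      set A : Ideal R := (I : Ideal R) ⊓ (K₁ : Ideal R) with hAdef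
      have hA : A ≠ ⊥ := h₁.2
      by_cases htop : A ⊔ (J : Ideal R) = ⊤
      · -- then K₁ ≤ I, so I is adjacent to K₂, shortening the walk
        have hmod : (A ⊔ (J : Ideal R)) ⊓ (K₁ : Ideal R)
            = A ⊔ ((J : Ideal R) ⊓ (K₁ : Ideal R)) :=
          sup_inf_assoc_of_le _ (inf_le_right : A ≤ (K₁ : Ideal R))
        have hK₁A : (K₁ : Ideal R) = A := by
          rw [htop, top_inf_eq, inf_comm, hK₁J, sup_bot_eq] at hmod
          exact hmod
        have hK₁I : (K₁ : Ideal R) ≤ (I : Ideal R) := hK₁A ▸ inf_le_left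
        have hIK₂ : I ≠ K₂ := by
          rintro rfl
          have := SimpleGraph.dist_le q
          omega
        have hadj : (interGraph (hV 𝒜)).Adj I K₂ := by
          refine ⟨hIK₂, fun hb => h₂.2 ?_⟩
          have : (K₁ : Ideal R) ⊓ (K₂ : Ideal R) ≤ (I : Ideal R) ⊓ (K₂ : Ideal R) :=
            inf_le_inf_right _ hK₁I
          rw [hb] at this
          exact le_bot_iff.mp this
        have := SimpleGraph.dist_le (SimpleGraph.Walk.cons hadj q)
        simp only [SimpleGraph.Walk.length_cons] at this
        omega
      · -- A ⊔ J is a common neighbor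
        have hMbot : A ⊔ (J : Ideal R) ≠ ⊥ := fun hb => J.2.1 (by
          have : (J : Ideal R) ≤ ⊥ := hb ▸ le_sup_right
          exact le_bot_iff.mp this)
        have hMhom : Ideal.IsHomogeneous 𝒜 (A ⊔ (J : Ideal R)) :=
          (Ideal.IsHomogeneous.inf I.2.2.2 K₁.2.2.2).sup J.2.2.2
        set M : hV 𝒜 := ⟨A ⊔ (J : Ideal R), hMbot, htop, hMhom⟩ with hMdef
        have hadj1 : (interGraph (hV 𝒜)).Adj I M := by
          constructor
          · intro he
            have hJI : (J : Ideal R) ≤ (I : Ideal R) := by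
              have : (J : Ideal R) ≤ (M : Ideal R) := le_sup_right
              rwa [← he] at this
            apply J.2.1
            have : (J : Ideal R) ≤ ⊥ := by
              rw [← hIJ0]; exact le_inf hJI le_rfl
            exact le_bot_iff.mp this
          · intro hb
            apply hA
            have : A ≤ (I : Ideal R) ⊓ (M : Ideal R) :=
              le_inf inf_le_left le_sup_left
            rw [hb] at this
            exact le_bot_iff.mp this
        have hadj2 : (interGraph (hV 𝒜)).Adj M J := by
          constructor
          · intro he
            apply hA
            have hAJ : A ≤ (J : Ideal R) := by
              have : A ≤ (M : Ideal R) := le_sup_left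
              rwa [he] at this
            have : A ≤ ⊥ := by
              rw [← hIJ0]; exact le_inf inf_le_left hAJ
            exact le_bot_iff.mp this
          · intro hb
            apply J.2.1
            have : (J : Ideal R) ≤ (M : Ideal R) ⊓ (J : Ideal R) :=
              le_inf le_sup_right le_rfl
            rw [hb] at this
            exact le_bot_iff.mp this
        have := SimpleGraph.dist_le
          (SimpleGraph.Walk.cons hadj1 (SimpleGraph.Walk.cons hadj2 SimpleGraph.Walk.nil))
        simp at this; omega
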